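/- In the Game of Privacy, if Carol learns Alice's secret bit a and Alice plays the strategy a?T:B (play T if a=1, B if a=0), then Carol has a response (a?L:R) yielding her payoff 8, strictly greater than her equilibrium expected payoff of 4; consequently the profile where Alice randomizes using a known bit is not a Nash equilibrium, and Alice's unique remaining pure Nash equilibrium payoff is 2, so keeping the secret (payoff 4) strictly dominates sharing it (payoff 2). -/

import Mathlib

inductive ACh | T | M | B
  deriving DecidableEq
instance : Fintype ACh := ⟨{.T, .M, .B}, fun x => by cases x <;> simp⟩
inductive CCh | L | Cc | R
  deriving DecidableEq
instance : Fintype CCh := ⟨{.L, .Cc, .R}, fun x => by cases x <;> simp⟩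

def gA : ACh → CCh → ℚ
  | .T, .L => 0
  | .T, .Cc => 0
  | .T, .R => 8
  | .M, .L => 2
  | .M, .Cc => 2
  | .M, .R => 2
  | .B, .L => 8
  | .B, .Cc => 0
  | .B, .R => 0

def gC : ACh → CCh → ℚ
  | .T, .L => 8
  | .T, .Cc => 2
  | .T, .R => 0
  | .M, .L => 0
  | .M, .Cc => 2
  | .M, .R => 0
  | .B, .L => 0
  | .B, .Cc => 2
  | .B, .R => 8

/-- Strategies when Alice's secret bit a is known to both players. -/
def EA (sA : Bool → ACh) (sC : Bool → CCh) : ℚ :=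
  (∑ a : Bool, gA (sA a) (sC a)) / 2
def EC (sA : Bool → ACh) (sC : Bool → CCh) : ℚ :=
  (∑ a : Bool, gC (sA a) (sC a)) / 2

def Nash (sA : Bool → ACh) (sC : Bool → CCh) : Prop :=
  (∀ sA' : Bool → ACh, EA sA' sC ≤ EA sA sC) ∧
  (∀ sC' : Bool → CCh, EC sA sC' ≤ EC sA sC)

def aTB : Bool → ACh := fun a => if a then .T else .B
def aLR : Bool → CCh := fun a => if a then .L else .R

def gAZ : ACh → CCh → ℤ
  | .T, .L => 0 | .T, .Cc => 0 | .T, .R => 8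
  | .M, .L => 2 | .M, .Cc => 2 | .M, .R => 2
  | .B, .L => 8 | .B, .Cc => 0 | .B, .R => 0

def gCZ : ACh → CCh → ℤ
  | .T, .L => 8 | .T, .Cc => 2 | .T, .R => 0
  | .M, .L => 0 | .M, .Cc => 2 | .M, .R => 0
  | .B, .L => 0 | .B, .Cc => 2 | .B, .R => 8

lemma gA_cast (x y) : gA x y = ((gAZ x y : ℤ) : ℚ) := by
  cases x <;> cases y <;> norm_num [gA, gAZ]

lemma gC_cast (x y) : gC x y = ((gCZ x y : ℤ) : ℚ) := by
  cases x <;> cases y <;> norm_num [gC, gCZ]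

def SZA (sA : Bool → ACh) (sC : Bool → CCh) : ℤ :=
  gAZ (sA true) (sC true) + gAZ (sA false) (sC false)
def SZC (sA : Bool → ACh) (sC : Bool → CCh) : ℤ :=
  gCZ (sA true) (sC true) + gCZ (sA false) (sC false)

lemma EA_eq (sA sC) : EA sA sC = ((SZA sA sC : ℤ) : ℚ) / 2 := by
  simp [EA, Fintype.sum_bool, SZA, gA_cast, Int.cast_add]

lemma EC_eq (sA sC) : EC sA sC = ((SZC sA sC : ℤ) : ℚ) / 2 := by
  simp [EC, Fintype.sum_bool, SZC, gC_cast, Int.cast_add]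

def NashZ (sA : Bool → ACh) (sC : Bool → CCh) : Prop :=
  (∀ sA' : Bool → ACh, SZA sA' sC ≤ SZA sA sC) ∧
  (∀ sC' : Bool → CCh, SZC sA sC' ≤ SZC sA sC)

lemma Nash_iff (sA sC) : Nash sA sC ↔ NashZ sA sC := by
  unfold Nash NashZ
  simp only [EA_eq, EC_eq, div_le_div_iff_of_pos_right (c := (2:ℚ)) two_pos, Int.cast_le]

instance (sA sC) : Decidable (NashZ sA sC) := by unfold NashZ; infer_instance

/-- If Carol knows a and Alice plays a?T:B then Carol's response a?L:R pays her 8 > 4;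
no profile with Alice playing a?T:B is Nash; every Nash equilibrium of the public-secret
game pays Alice 2, so keeping the secret (4) strictly dominates sharing it (2). -/
theorem privacy_secrecy_dominant :
    EC aTB aLR = 8 ∧ (4 : ℚ) < 8 ∧
    (∀ sC : Bool → CCh, ¬ Nash aTB sC) ∧
    (∀ sA sC, Nash sA sC → EA sA sC = 2) ∧ (2 : ℚ) < 4 := by
  refine ⟨?_, by norm_num, ?_, ?_, by norm_num⟩
  · rw [EC_eq]; norm_num [SZC, gCZ, aTB, aLR]
  · intro sC h
    rw [Nash_iff] at h
    exact (by decide : ∀ sC : Bool → CCh, ¬ NashZ aTB sC) sC h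
  · intro sA sC h
    rw [Nash_iff] at h
    rw [EA_eq, (by revert h; revert sC; revert sA; decide : SZA sA sC = 4)]
    norm_num
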